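/- arXiv:2004.12712 — 2 statements merged into one kernel-verified Lean document; each statement's English description precedes it below -/
import Mathlib

section
/- Let 1 < q < ∞, let Ω ⊆ ℝⁿ be an open set, and let w, a be weights on Ω with w·a^ε ∈ L¹_loc(Ω) for all ε ∈ (0, q−1). If a ∈ L^q(Ω, w), then for every measurable function f one has ‖f‖_{L^{q)}_a(Ω,w)} ≤ ‖f‖_{L^q(Ω,w)} · ‖a‖_{L^{q)}_a(Ω,w)} · ‖a‖_{L^q(Ω,w)}^{−1}, and for every fixed ε ∈ (0, q−1) one has ‖f‖_{L^{q−ε}(Ω, w a^ε)} ≤ ε^{−1/(q−ε)} ‖f‖_{L^{q)}_a(Ω,w)}; in particular the continuous embeddings L^q(Ω,w) ↪ L^{q)}_a(Ω,w) ↪ L^{q−ε}(Ω, w a^ε) hold. -/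
open MeasureTheory Metric Set ENNReal

/-- The weighted Lebesgue norm `‖f‖_{L^p(Ω,v)} = (∫_Ω |f|^p v dx)^{1/p}`. -/
noncomputable def wLqNorm {n : ℕ} (p : ℝ) (v : EuclideanSpace ℝ (Fin n) → ℝ)
    (Ω : Set (EuclideanSpace ℝ (Fin n))) (f : EuclideanSpace ℝ (Fin n) → ℝ) : ℝ≥0∞ :=
  (∫⁻ x in Ω, ENNReal.ofReal |f x| ^ p * ENNReal.ofReal (v x)) ^ (1 / p)

/-- The generalized grand Lebesgue norm
`‖f‖_{L^{q)}_a(Ω,w)} = sup_{0<ε<q−1} (ε ∫_Ω |f|^{q−ε} w a^ε dx)^{1/(q−ε)}`. -/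
noncomputable def grandNorm {n : ℕ} (q : ℝ) (w a : EuclideanSpace ℝ (Fin n) → ℝ)
    (Ω : Set (EuclideanSpace ℝ (Fin n))) (f : EuclideanSpace ℝ (Fin n) → ℝ) : ℝ≥0∞ :=
  ⨆ (ε : ℝ) (_ : ε ∈ Set.Ioo (0 : ℝ) (q - 1)),
    (ENNReal.ofReal ε *
      ∫⁻ x in Ω, ENNReal.ofReal |f x| ^ (q - ε) * ENNReal.ofReal (w x * a x ^ ε))
        ^ (1 / (q - ε))

/-- if `a ∈ L^q(Ω,w)` then for every measurable `f`,
`‖f‖_{L^{q)}_a(Ω,w)} ≤ ‖f‖_{L^q(Ω,w)} ‖a‖_{L^{q)}_a(Ω,w)} ‖a‖_{L^q(Ω,w)}^{−1}`, and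
for every `ε ∈ (0,q−1)`,
`‖f‖_{L^{q−ε}(Ω,w a^ε)} ≤ ε^{−1/(q−ε)} ‖f‖_{L^{q)}_a(Ω,w)}`;
in particular `L^q(Ω,w) ↪ L^{q)}_a(Ω,w) ↪ L^{q−ε}(Ω,w a^ε)`. -/
theorem grand_lebesgue_embeddings {n : ℕ} (q : ℝ) (hq : 1 < q)
    (Ω : Set (EuclideanSpace ℝ (Fin n))) (hΩ : IsOpen Ω)
    (w a : EuclideanSpace ℝ (Fin n) → ℝ)
    (hw_meas : Measurable w) (hw_pos : ∀ᵐ x ∂volume.restrict Ω, 0 < w x)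
    (ha_meas : Measurable a) (ha_pos : ∀ᵐ x ∂volume.restrict Ω, 0 < a x)
    (hloc : ∀ ε ∈ Set.Ioo (0 : ℝ) (q - 1),
      LocallyIntegrableOn (fun x => w x * a x ^ ε) Ω volume)
    (ha_mem : wLqNorm q w Ω a ≠ ⊤)
    (f : EuclideanSpace ℝ (Fin n) → ℝ) (hf : Measurable f) :
    grandNorm q w a Ω f ≤ wLqNorm q w Ω f * grandNorm q w a Ω a * (wLqNorm q w Ω a)⁻¹ ∧
    ∀ ε ∈ Set.Ioo (0 : ℝ) (q - 1),
      wLqNorm (q - ε) (fun x => w x * a x ^ ε) Ω f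
        ≤ ENNReal.ofReal (ε ^ (-(1 / (q - ε)))) * grandNorm q w a Ω f := by
  have hq0 : (0 : ℝ) < q := lt_trans one_pos hq
  set A := ∫⁻ x in Ω, ENNReal.ofReal |f x| ^ q * ENNReal.ofReal (w x) with hA
  set B := ∫⁻ x in Ω, ENNReal.ofReal |a x| ^ q * ENNReal.ofReal (w x) with hB
  have hwf : wLqNorm q w Ω f = A ^ (1 / q) := rfl
  have hwa : wLqNorm q w Ω a = B ^ (1 / q) := rfl
  constructor
  · by_cases hB0 : B = 0
    · -- degenerate case: the restricted measure is zero
      have hmeas : Measurable fun x => ENNReal.ofReal |a x| ^ q * ENNReal.ofReal (w x) :=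
        (ha_meas.abs.ennreal_ofReal.pow_const q).mul hw_meas.ennreal_ofReal
      have h0 : ∀ᵐ x ∂volume.restrict Ω, ENNReal.ofReal |a x| ^ q * ENNReal.ofReal (w x) = 0 :=
        (lintegral_eq_zero_iff hmeas).1 (hB ▸ hB0)
      have hfalse : ∀ᵐ _x ∂volume.restrict Ω, False := by
        filter_upwards [h0, hw_pos, ha_pos] with x h0x hwx hax
        have h1 : ENNReal.ofReal |a x| ^ q ≠ 0 :=
          (ENNReal.rpow_pos (ENNReal.ofReal_pos.2 (abs_pos.2 hax.ne')) ofReal_ne_top).ne'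
        have h2 : ENNReal.ofReal (w x) ≠ 0 := (ENNReal.ofReal_pos.2 hwx).ne'
        exact (mul_ne_zero h1 h2) h0x
      have hrest : volume.restrict Ω = 0 :=
        ae_eq_bot.mp (Filter.eventually_false_iff_eq_bot.mp hfalse)
      have hzero : grandNorm q w a Ω f = 0 := by
        refine le_antisymm (iSup₂_le fun ε hε => ?_) zero_le
        rw [hrest, lintegral_zero_measure, mul_zero,
          ENNReal.zero_rpow_of_pos (by simp only [one_div, inv_pos]; linarith [hε.2])]
      rw [hzero]; exact zero_le
    · have hBT : B ≠ ⊤ := by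
        intro h
        exact ha_mem (by rw [hwa, h, ENNReal.top_rpow_of_pos (by positivity)])
      refine iSup₂_le fun ε hε => ?_
      obtain ⟨hε0, hε1⟩ := hε
      have hqε : 0 < q - ε := by linarith
      have hr0 : (0:ℝ) < 1 / (q - ε) := by positivity
      have he0 : ENNReal.ofReal ε ≠ 0 := (ENNReal.ofReal_pos.2 hε0).ne'
      have hconj : (q / (q - ε)).HolderConjugate (q / ε) := by
        constructor
        · rw [inv_div, inv_div, inv_one, ← add_div, sub_add_cancel, div_self hq0.ne']
        · positivity
        · positivity
      set F := fun x => ENNReal.ofReal |f x| ^ (q - ε) * ENNReal.ofReal (w x) ^ ((q - ε) / q)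
        with hF
      set G := fun x => ENNReal.ofReal (a x) ^ ε * ENNReal.ofReal (w x) ^ (ε / q) with hG
      have hFm : Measurable F :=
        (hf.abs.ennreal_ofReal.pow_const _).mul (hw_meas.ennreal_ofReal.pow_const _)
      have hGm : Measurable G :=
        (ha_meas.ennreal_ofReal.pow_const _).mul (hw_meas.ennreal_ofReal.pow_const _)
      have hprod : (fun x => ENNReal.ofReal |f x| ^ (q - ε) * ENNReal.ofReal (w x * a x ^ ε))
          =ᵐ[volume.restrict Ω] fun x => (F * G) x := by
        filter_upwards [hw_pos, ha_pos] with x hwx hax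
        simp only [Pi.mul_apply, hF, hG]
        rw [ENNReal.ofReal_mul hwx.le, ← ENNReal.ofReal_rpow_of_pos hax]
        have hw1 : ENNReal.ofReal (w x) ^ ((q - ε) / q) * ENNReal.ofReal (w x) ^ (ε / q)
            = ENNReal.ofReal (w x) := by
          rw [← ENNReal.rpow_add _ _ (ENNReal.ofReal_pos.2 hwx).ne' ofReal_ne_top,
            ← add_div, sub_add_cancel, div_self hq0.ne', ENNReal.rpow_one]
        conv_rhs => rw [mul_mul_mul_comm, hw1]
        ring
      have hFp : ∀ x, F x ^ (q / (q - ε)) = ENNReal.ofReal |f x| ^ q * ENNReal.ofReal (w x) := by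
        intro x
        simp only [hF]
        rw [ENNReal.mul_rpow_of_nonneg _ _ (by positivity), ← ENNReal.rpow_mul,
          ← ENNReal.rpow_mul,
          show (q - ε) * (q / (q - ε)) = q by field_simp <;> first | rfl | ring1 | (left; ring1) | (left; trivial),
          show ((q - ε) / q) * (q / (q - ε)) = 1 by field_simp <;> first | rfl | ring1 | (left; ring1) | (left; trivial), ENNReal.rpow_one]
      have hGp : ∀ x, G x ^ (q / ε) = ENNReal.ofReal (a x) ^ q * ENNReal.ofReal (w x) := by
        intro x
        simp only [hG]
        rw [ENNReal.mul_rpow_of_nonneg _ _ (by positivity), ← ENNReal.rpow_mul,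
          ← ENNReal.rpow_mul,
          show ε * (q / ε) = q by field_simp <;> first | rfl | ring1 | (left; ring1) | (left; trivial),
          show (ε / q) * (q / ε) = 1 by field_simp <;> first | rfl | ring1 | (left; ring1) | (left; trivial), ENNReal.rpow_one]
      have holder : (∫⁻ x in Ω, ENNReal.ofReal |f x| ^ (q - ε) * ENNReal.ofReal (w x * a x ^ ε))
          ≤ A ^ ((q - ε) / q) * B ^ (ε / q) := by
        calc (∫⁻ x in Ω, ENNReal.ofReal |f x| ^ (q - ε) * ENNReal.ofReal (w x * a x ^ ε))
            = ∫⁻ x in Ω, (F * G) x := lintegral_congr_ae hprod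
          _ ≤ (∫⁻ x in Ω, F x ^ (q / (q - ε))) ^ (1 / (q / (q - ε)))
                * (∫⁻ x in Ω, G x ^ (q / ε)) ^ (1 / (q / ε)) :=
              ENNReal.lintegral_mul_le_Lp_mul_Lq _ hconj hFm.aemeasurable hGm.aemeasurable
          _ = A ^ ((q - ε) / q) * B ^ (ε / q) := by
              rw [one_div_div, one_div_div]
              congr 1
              · congr 1
                rw [hA]
                exact lintegral_congr fun x => hFp x
              · congr 1
                rw [hB]
                refine lintegral_congr_ae ?_
                filter_upwards [ha_pos] with x hax
                rw [hGp x, abs_of_pos hax]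
      have hBa : (∫⁻ x in Ω, ENNReal.ofReal |a x| ^ (q - ε) * ENNReal.ofReal (w x * a x ^ ε))
          = B := by
        rw [hB]
        refine lintegral_congr_ae ?_
        filter_upwards [hw_pos, ha_pos] with x hwx hax
        rw [ENNReal.ofReal_mul hwx.le, ← ENNReal.ofReal_rpow_of_pos hax, abs_of_pos hax]
        have h3 : ENNReal.ofReal (a x) ^ (q - ε) * ENNReal.ofReal (a x) ^ ε
            = ENNReal.ofReal (a x) ^ q := by
          rw [← ENNReal.rpow_add _ _ (ENNReal.ofReal_pos.2 hax).ne' ofReal_ne_top,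
            sub_add_cancel]
        rw [← h3]; ring
      have hGa : (ENNReal.ofReal ε * B) ^ (1 / (q - ε)) ≤ grandNorm q w a Ω a := by
        rw [grandNorm, ← hBa]
        exact le_iSup₂ (f := fun (ε : ℝ) (_ : ε ∈ Set.Ioo (0:ℝ) (q-1)) =>
          (ENNReal.ofReal ε *
            ∫⁻ x in Ω, ENNReal.ofReal |a x| ^ (q - ε) * ENNReal.ofReal (w x * a x ^ ε))
              ^ (1 / (q - ε))) ε ⟨hε0, hε1⟩
      calc (ENNReal.ofReal ε *
            ∫⁻ x in Ω, ENNReal.ofReal |f x| ^ (q - ε) * ENNReal.ofReal (w x * a x ^ ε))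
              ^ (1 / (q - ε))
          ≤ (ENNReal.ofReal ε * (A ^ ((q - ε) / q) * B ^ (ε / q))) ^ (1 / (q - ε)) :=
            ENNReal.rpow_le_rpow (mul_le_mul_right holder _) hr0.le
        _ = A ^ (1 / q) * ((ENNReal.ofReal ε * B) ^ (1 / (q - ε)) * B ^ (-(1 / q))) := by
            rw [ENNReal.mul_rpow_of_nonneg _ _ hr0.le, ENNReal.mul_rpow_of_nonneg _ _ hr0.le,
              ENNReal.mul_rpow_of_nonneg _ _ hr0.le, ← ENNReal.rpow_mul, ← ENNReal.rpow_mul,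
              show ((q - ε) / q) * (1 / (q - ε)) = 1 / q by field_simp <;> first | rfl | ring1 | (left; ring1) | (left; trivial),
              show (ε / q) * (1 / (q - ε)) = 1 / (q - ε) + -(1 / q) by field_simp <;> first | rfl | ring1 | (left; ring1) | (left; trivial),
              ENNReal.rpow_add _ _ hB0 hBT]
            ring
        _ ≤ A ^ (1 / q) * (grandNorm q w a Ω a * B ^ (-(1 / q))) :=
            mul_le_mul_right (mul_le_mul_left hGa _) _
        _ = wLqNorm q w Ω f * grandNorm q w a Ω a * (wLqNorm q w Ω a)⁻¹ := by
            rw [hwf, hwa, ENNReal.rpow_neg, ← mul_assoc]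
  · intro ε hε
    obtain ⟨hε0, hε1⟩ := hε
    have hqε : 0 < q - ε := by linarith
    set I := ∫⁻ x in Ω, ENNReal.ofReal |f x| ^ (q - ε) * ENNReal.ofReal (w x * a x ^ ε)
      with hI
    have hwI : wLqNorm (q - ε) (fun x => w x * a x ^ ε) Ω f = I ^ (1 / (q - ε)) := rfl
    set e := ENNReal.ofReal ε with he
    have he0 : e ≠ 0 := by rw [he]; exact (ENNReal.ofReal_pos.2 hε0).ne'
    have heT : e ≠ ⊤ := ofReal_ne_top
    have hG : (e * I) ^ (1 / (q - ε)) ≤ grandNorm q w a Ω f :=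
      le_iSup₂ (f := fun (ε : ℝ) (_ : ε ∈ Set.Ioo (0 : ℝ) (q - 1)) =>
        (ENNReal.ofReal ε *
          ∫⁻ x in Ω, ENNReal.ofReal |f x| ^ (q - ε) * ENNReal.ofReal (w x * a x ^ ε))
            ^ (1 / (q - ε))) ε ⟨hε0, hε1⟩
    have hrw : ENNReal.ofReal (ε ^ (-(1 / (q - ε)))) = e ^ (-(1 / (q - ε))) :=
      (ENNReal.ofReal_rpow_of_pos hε0).symm
    have h1 : e ^ (1 / (q - ε)) ≠ 0 :=
      (ENNReal.rpow_pos (ENNReal.ofReal_pos.2 hε0) ofReal_ne_top).ne'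
    have h2 : e ^ (1 / (q - ε)) ≠ ⊤ := ENNReal.rpow_ne_top_of_nonneg (by positivity) heT
    rw [hwI, hrw]
    calc I ^ (1 / (q - ε)) = e ^ (-(1 / (q - ε))) * (e * I) ^ (1 / (q - ε)) := by
          rw [ENNReal.mul_rpow_of_nonneg _ _ (by positivity : (0:ℝ) ≤ 1 / (q - ε)),
            ENNReal.rpow_neg, ← mul_assoc, ENNReal.inv_mul_cancel h1 h2, one_mul]
      _ ≤ _ := mul_le_mul_right hG _
end

section
/- Let 1 < q < ∞, let Ω ⊆ ℝⁿ be an open set, and let w, a be weights with w·a^ε ∈ L¹_loc(Ω) for all ε ∈ (0, q−1) and a ∈ L^q(Ω,w). Then the generalized grand Lebesgue space L^{q)}_a(Ω,w), equipped with the norm ‖·‖_{L^{q)}_a(Ω,w)}, is a Banach space (in particular it is complete). -/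
open MeasureTheory Metric Set ENNReal

section Helpers
open Filter Topology

variable {α : Type*} [MeasurableSpace α] {μ : Measure α}

/-- Weighted Minkowski inequality. -/
lemma weighted_minkowski {p : ℝ} (hp : 1 ≤ p) {v A B : α → ℝ≥0∞}
    (hv : Measurable v) (hA : Measurable A) (hB : Measurable B) :
    (∫⁻ x, (A x + B x) ^ p * v x ∂μ) ^ (1/p) ≤
      (∫⁻ x, A x ^ p * v x ∂μ) ^ (1/p) + (∫⁻ x, B x ^ p * v x ∂μ) ^ (1/p) := by
  have h1 : ∀ (C : α → ℝ≥0∞), Measurable C → ∫⁻ x, C x ^ p * v x ∂μ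
      = ∫⁻ x, C x ^ p ∂(μ.withDensity v) := by
    intro C hC
    rw [lintegral_withDensity_eq_lintegral_mul μ hv (hC.pow measurable_const)]
    exact lintegral_congr fun x => mul_comm _ _
  have e := h1 (fun x => A x + B x) (hA.add hB)
  rw [e, h1 _ hA, h1 _ hB]
  exact ENNReal.lintegral_Lp_add_le hA.aemeasurable hB.aemeasurable hp

/-- Finite-sum weighted Minkowski. -/
lemma weighted_minkowski_sum {p : ℝ} (hp : 1 ≤ p) {v : α → ℝ≥0∞} (hv : Measurable v)
    (A : ℕ → α → ℝ≥0∞) (hA : ∀ j, Measurable (A j)) (J : ℕ) :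
    (∫⁻ x, (∑ j ∈ Finset.range J, A j x) ^ p * v x ∂μ) ^ (1/p) ≤
      ∑ j ∈ Finset.range J, (∫⁻ x, A j x ^ p * v x ∂μ) ^ (1/p) := by
  induction J with
  | zero =>
      have hp0 : (0:ℝ) < p := lt_of_lt_of_le one_pos hp
      simp only [Finset.range_zero, Finset.sum_empty]
      rw [ENNReal.zero_rpow_of_pos hp0]
      simp only [zero_mul, lintegral_zero]
      rw [ENNReal.zero_rpow_of_pos (one_div_pos.mpr hp0)]
  | succ J ih =>
      simp only [Finset.sum_range_succ]
      calc (∫⁻ x, ((∑ j ∈ Finset.range J, A j x) + A J x) ^ p * v x ∂μ) ^ (1/p)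
          ≤ (∫⁻ x, (∑ j ∈ Finset.range J, A j x) ^ p * v x ∂μ) ^ (1/p)
            + (∫⁻ x, A J x ^ p * v x ∂μ) ^ (1/p) :=
            weighted_minkowski hp hv (Finset.measurable_sum _ fun j _ => hA j) (hA J)
        _ ≤ _ := add_le_add ih le_rfl
lemma grand_le {n : ℕ} (q : ℝ) (w a : EuclideanSpace ℝ (Fin n) → ℝ)
    (Ω : Set (EuclideanSpace ℝ (Fin n))) (f : EuclideanSpace ℝ (Fin n) → ℝ)
    {ε : ℝ} (hε : ε ∈ Set.Ioo (0 : ℝ) (q - 1)) :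
    (ENNReal.ofReal ε *
      ∫⁻ x in Ω, ENNReal.ofReal |f x| ^ (q - ε) * ENNReal.ofReal (w x * a x ^ ε))
        ^ (1 / (q - ε)) ≤ grandNorm q w a Ω f :=
  le_iSup_of_le ε (le_iSup_of_le hε le_rfl)

lemma grand_congr_abs {n : ℕ} (q : ℝ) (w a : EuclideanSpace ℝ (Fin n) → ℝ)
    (Ω : Set (EuclideanSpace ℝ (Fin n))) {f g : EuclideanSpace ℝ (Fin n) → ℝ}
    (h : ∀ x, |f x| = |g x|) :
    grandNorm q w a Ω f = grandNorm q w a Ω g := by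
  simp only [grandNorm, h]

lemma grand_triangle {n : ℕ} {q : ℝ} (hq : 1 < q) (w a : EuclideanSpace ℝ (Fin n) → ℝ)
    (Ω : Set (EuclideanSpace ℝ (Fin n)))
    (hw_meas : Measurable w) (ha_meas : Measurable a)
    {f g u : EuclideanSpace ℝ (Fin n) → ℝ}
    (hf : Measurable f) (hg : Measurable g)
    (hu : ∀ x, |u x| ≤ |f x| + |g x|) :
    grandNorm q w a Ω u ≤ grandNorm q w a Ω f + grandNorm q w a Ω g := by
  rw [grandNorm]
  refine iSup₂_le fun ε hε => ?_
  obtain ⟨hε0, hε1⟩ := hε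
  set p := q - ε with hp_def
  have hp1 : 1 ≤ p := by simp only [hp_def]; linarith
  have hp0 : (0:ℝ) < p := lt_of_lt_of_le one_pos hp1
  set v : EuclideanSpace ℝ (Fin n) → ℝ≥0∞ := fun x => ENNReal.ofReal (w x * a x ^ ε)
    with hv_def
  have hv : Measurable v := (hw_meas.mul (ha_meas.pow measurable_const)).ennreal_ofReal
  have hstep : ∫⁻ x in Ω, ENNReal.ofReal |u x| ^ p * v x
      ≤ ∫⁻ x in Ω, (ENNReal.ofReal |f x| + ENNReal.ofReal |g x|) ^ p * v x := by
    refine lintegral_mono fun x => mul_le_mul_left ?_ _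
    refine ENNReal.rpow_le_rpow ?_ hp0.le
    rw [← ENNReal.ofReal_add (abs_nonneg _) (abs_nonneg _)]
    exact ENNReal.ofReal_le_ofReal (hu x)
  calc (ENNReal.ofReal ε * ∫⁻ x in Ω, ENNReal.ofReal |u x| ^ p * v x) ^ (1/p)
      ≤ (ENNReal.ofReal ε *
          ∫⁻ x in Ω, (ENNReal.ofReal |f x| + ENNReal.ofReal |g x|) ^ p * v x) ^ (1/p) :=
        ENNReal.rpow_le_rpow (mul_le_mul_right hstep _) (by positivity)
    _ = (ENNReal.ofReal ε) ^ (1/p) *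
          (∫⁻ x in Ω, (ENNReal.ofReal |f x| + ENNReal.ofReal |g x|) ^ p * v x) ^ (1/p) :=
        ENNReal.mul_rpow_of_nonneg _ _ (by positivity)
    _ ≤ (ENNReal.ofReal ε) ^ (1/p) *
          ((∫⁻ x in Ω, ENNReal.ofReal |f x| ^ p * v x) ^ (1/p)
            + (∫⁻ x in Ω, ENNReal.ofReal |g x| ^ p * v x) ^ (1/p)) :=
        mul_le_mul_right (weighted_minkowski hp1 hv hf.abs.ennreal_ofReal
          hg.abs.ennreal_ofReal) _
    _ = (ENNReal.ofReal ε * ∫⁻ x in Ω, ENNReal.ofReal |f x| ^ p * v x) ^ (1/p)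
        + (ENNReal.ofReal ε * ∫⁻ x in Ω, ENNReal.ofReal |g x| ^ p * v x) ^ (1/p) := by
        rw [mul_add, ENNReal.mul_rpow_of_nonneg _ _ (by positivity : (0:ℝ) ≤ 1/p),
          ENNReal.mul_rpow_of_nonneg _ _ (by positivity : (0:ℝ) ≤ 1/p)]
    _ ≤ grandNorm q w a Ω f + grandNorm q w a Ω g :=
        add_le_add (grand_le q w a Ω f ⟨hε0, hε1⟩) (grand_le q w a Ω g ⟨hε0, hε1⟩)

end Helpers

open Filter Topology

/-- if `w·a^ε ∈ L¹_loc(Ω)` for all `ε ∈ (0,q−1)` and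
`a ∈ L^q(Ω,w)`, the generalized grand Lebesgue space `L^{q)}_a(Ω,w)` is a Banach
space; in particular it is complete: every Cauchy sequence (w.r.t. the grand norm)
of functions with finite grand norm converges in the grand norm to a function
with finite grand norm. -/
theorem grand_lebesgue_complete {n : ℕ} (q : ℝ) (hq : 1 < q)
    (Ω : Set (EuclideanSpace ℝ (Fin n))) (hΩ : IsOpen Ω)
    (w a : EuclideanSpace ℝ (Fin n) → ℝ)
    (hw_meas : Measurable w) (hw_pos : ∀ᵐ x ∂volume.restrict Ω, 0 < w x)
    (ha_meas : Measurable a) (ha_pos : ∀ᵐ x ∂volume.restrict Ω, 0 < a x)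
    (hloc : ∀ ε ∈ Set.Ioo (0 : ℝ) (q - 1),
      LocallyIntegrableOn (fun x => w x * a x ^ ε) Ω volume)
    (ha_mem : wLqNorm q w Ω a ≠ ⊤)
    (F : ℕ → EuclideanSpace ℝ (Fin n) → ℝ)
    (hF_meas : ∀ k, Measurable (F k))
    (hF_mem : ∀ k, grandNorm q w a Ω (F k) ≠ ⊤)
    (hF_cauchy : ∀ δ : ℝ, 0 < δ → ∃ N : ℕ, ∀ m ≥ N, ∀ k ≥ N,
      grandNorm q w a Ω (fun x => F m x - F k x) < ENNReal.ofReal δ) :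
    ∃ f : EuclideanSpace ℝ (Fin n) → ℝ, Measurable f ∧ grandNorm q w a Ω f ≠ ⊤ ∧
      ∀ δ : ℝ, 0 < δ → ∃ N : ℕ, ∀ k ≥ N,
        grandNorm q w a Ω (fun x => F k x - f x) < ENNReal.ofReal δ := by
  have hv_meas : ∀ ε : ℝ, Measurable fun x : EuclideanSpace ℝ (Fin n) =>
      ENNReal.ofReal (w x * a x ^ ε) :=
    fun ε => (hw_meas.mul (ha_meas.pow measurable_const)).ennreal_ofReal
  -- extraction of a rapidly Cauchy subsequence
  choose Nf hNf using fun j : ℕ => hF_cauchy ((1/2)^j) (by positivity)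
  set k : ℕ → ℕ := fun j => Nat.rec (Nf 0) (fun j kj => max (kj+1) (Nf (j+1))) j with hk_def
  have hk_succ : ∀ j, k (j+1) = max (k j + 1) (Nf (j+1)) := fun j => rfl
  have hk_mono : StrictMono k := strictMono_nat_of_lt_succ fun j => by
    rw [hk_succ]; exact lt_of_lt_of_le (Nat.lt_succ_self _) (le_max_left _ _)
  have hkN : ∀ j, Nf j ≤ k j := by
    intro j
    cases j with
    | zero => exact le_rfl
    | succ j => rw [hk_succ]; exact le_max_right _ _
  set d : ℕ → EuclideanSpace ℝ (Fin n) → ℝ := fun j x => F (k (j+1)) x - F (k j) x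
    with hd_def
  have hd_meas : ∀ j, Measurable (d j) := fun j => (hF_meas _).sub (hF_meas _)
  have hd : ∀ j, grandNorm q w a Ω (d j) < ENNReal.ofReal ((1/2)^j) :=
    fun j => hNf j _ (le_trans (hkN j) (hk_mono (Nat.lt_succ_self j)).le) _ (hkN j)
  -- fixed exponent
  set ε0 : ℝ := (q-1)/2 with hε0_def
  have hε0 : ε0 ∈ Set.Ioo (0:ℝ) (q-1) := ⟨by rw [hε0_def]; linarith, by rw [hε0_def]; linarith⟩
  set p0 : ℝ := q - ε0 with hp0_def
  have hp0_1 : 1 ≤ p0 := by rw [hp0_def, hε0_def]; linarith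
  have hp0pos : (0:ℝ) < p0 := lt_of_lt_of_le one_pos hp0_1
  set v0 : EuclideanSpace ℝ (Fin n) → ℝ≥0∞ := fun x => ENNReal.ofReal (w x * a x ^ ε0)
    with hv0_def
  have hv0 : Measurable v0 := hv_meas ε0
  -- summability estimates
  set S : EuclideanSpace ℝ (Fin n) → ℝ≥0∞ := fun x => ∑' j, ENNReal.ofReal |d j x|
    with hS_def
  have hS_meas : Measurable S := Measurable.ennreal_tsum fun j => (hd_meas j).abs.ennreal_ofReal
  set C : ℝ≥0∞ := ((ENNReal.ofReal ε0)⁻¹) ^ (1/p0) with hC_def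
  have hC_ne : C ≠ ⊤ := ENNReal.rpow_ne_top_of_nonneg (by positivity)
      (ENNReal.inv_ne_top.mpr (ENNReal.ofReal_pos.mpr hε0.1).ne')
  have hA : ∀ j, (∫⁻ x in Ω, ENNReal.ofReal |d j x| ^ p0 * v0 x) ^ (1/p0)
      ≤ C * ENNReal.ofReal ((1/2)^j) := by
    intro j
    have h1 : (ENNReal.ofReal ε0 * ∫⁻ x in Ω, ENNReal.ofReal |d j x| ^ p0 * v0 x) ^ (1/p0)
        ≤ ENNReal.ofReal ((1/2)^j) := by
      refine le_of_lt (lt_of_le_of_lt ?_ (hd j))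
      exact grand_le q w a Ω (d j) hε0
    have h2 : (∫⁻ x in Ω, ENNReal.ofReal |d j x| ^ p0 * v0 x)
        = (ENNReal.ofReal ε0)⁻¹ *
          (ENNReal.ofReal ε0 * ∫⁻ x in Ω, ENNReal.ofReal |d j x| ^ p0 * v0 x) := by
      rw [← mul_assoc, ENNReal.inv_mul_cancel (ENNReal.ofReal_pos.mpr hε0.1).ne'
        ENNReal.ofReal_ne_top, one_mul]
    rw [h2, ENNReal.mul_rpow_of_nonneg _ _ (by positivity : (0:ℝ) ≤ 1/p0)]
    exact mul_le_mul_right h1 _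
  set D : ℝ≥0∞ := C * (1 - ENNReal.ofReal (1/2))⁻¹ with hD_def
  have hD_ne : D ≠ ⊤ := ENNReal.mul_ne_top hC_ne (ENNReal.inv_ne_top.mpr (by
    rw [Ne, tsub_eq_zero_iff_le]
    exact not_le.mpr (ENNReal.ofReal_lt_one.mpr (by norm_num))))
  have hsum_le : ∀ J : ℕ,
      (∫⁻ x in Ω, (∑ j ∈ Finset.range J, ENNReal.ofReal |d j x|) ^ p0 * v0 x) ^ (1/p0) ≤ D := by
    intro J
    refine le_trans (weighted_minkowski_sum hp0_1 hv0 _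
      (fun j => (hd_meas j).abs.ennreal_ofReal) J) ?_
    calc ∑ j ∈ Finset.range J, (∫⁻ x in Ω, ENNReal.ofReal |d j x| ^ p0 * v0 x) ^ (1/p0)
        ≤ ∑ j ∈ Finset.range J, C * ENNReal.ofReal ((1/2)^j) :=
          Finset.sum_le_sum fun j _ => hA j
      _ = C * ∑ j ∈ Finset.range J, (ENNReal.ofReal (1/2))^j := by
          rw [Finset.mul_sum]
          exact Finset.sum_congr rfl fun j _ => by
            rw [← ENNReal.ofReal_pow (by norm_num : (0:ℝ) ≤ 1/2)]
      _ ≤ C * ∑' j : ℕ, (ENNReal.ofReal (1/2))^j :=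
          mul_le_mul_right (ENNReal.sum_le_tsum _) _
      _ = D := by rw [ENNReal.tsum_geometric]
  have hItot : (∫⁻ x in Ω, S x ^ p0 * v0 x) ≤ D ^ p0 := by
    have h1 : (∫⁻ x in Ω, S x ^ p0 * v0 x)
        = ∫⁻ x in Ω, liminf
          (fun J => (∑ j ∈ Finset.range J, ENNReal.ofReal |d j x|) ^ p0 * v0 x) atTop := by
      refine lintegral_congr fun x => ?_
      have ht : Tendsto (fun J => (∑ j ∈ Finset.range J, ENNReal.ofReal |d j x|) ^ p0 * v0 x)
          atTop (𝓝 (S x ^ p0 * v0 x)) := by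
        refine ENNReal.Tendsto.mul_const ?_ (Or.inr ENNReal.ofReal_ne_top)
        exact (ENNReal.continuous_rpow_const.tendsto _).comp (ENNReal.tendsto_nat_tsum _)
      exact ht.liminf_eq.symm
    rw [h1]
    refine le_trans (lintegral_liminf_le fun J =>
      (((Finset.measurable_sum _ fun j _ => (hd_meas j).abs.ennreal_ofReal).pow
        measurable_const).mul hv0)) ?_
    refine liminf_le_of_frequently_le' (Frequently.of_forall fun J => ?_)
    have h2 := ENNReal.rpow_le_rpow (hsum_le J) hp0pos.le
    rwa [← ENNReal.rpow_mul, one_div_mul_cancel hp0pos.ne', ENNReal.rpow_one] at h2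
  -- a.e. convergence of the subsequence
  have hfin : ∀ᵐ x ∂(volume.restrict Ω), S x ^ p0 * v0 x < ⊤ :=
    ae_lt_top ((hS_meas.pow measurable_const).mul hv0)
      (lt_of_le_of_lt hItot (ENNReal.rpow_lt_top_of_nonneg hp0pos.le hD_ne)).ne
  have hv0_pos : ∀ᵐ x ∂(volume.restrict Ω), 0 < w x * a x ^ ε0 := by
    filter_upwards [hw_pos, ha_pos] with x h1 h2
    exact mul_pos h1 (Real.rpow_pos_of_pos h2 _)
  have hS_fin : ∀ᵐ x ∂(volume.restrict Ω), S x ≠ ⊤ := by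
    filter_upwards [hfin, hv0_pos] with x h1 h2
    intro hS
    rw [hS, ENNReal.top_rpow_of_pos hp0pos,
      ENNReal.top_mul (by simpa [hv0_def, ENNReal.ofReal_eq_zero, not_le] using h2)] at h1
    exact lt_irrefl ⊤ h1
  set f : EuclideanSpace ℝ (Fin n) → ℝ := fun x =>
    (liminf (fun j => ENNReal.ofReal (F (k j) x)) atTop).toReal
      - (liminf (fun j => ENNReal.ofReal (-F (k j) x)) atTop).toReal with hf_def
  have hf_meas : Measurable f :=
    ((Measurable.liminf fun j => (hF_meas (k j)).ennreal_ofReal).ennreal_toReal).sub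
      ((Measurable.liminf fun j => (hF_meas (k j)).neg.ennreal_ofReal).ennreal_toReal)
  have hf_lim : ∀ᵐ x ∂(volume.restrict Ω), Tendsto (fun j => F (k j) x) atTop (𝓝 (f x)) := by
    filter_upwards [hS_fin] with x hx
    have hsum : Summable fun j => |d j x| := by
      have h := ENNReal.summable_toReal hx
      simpa [ENNReal.toReal_ofReal (abs_nonneg _)] using h
    have hC : CauchySeq fun j => F (k j) x := by
      apply cauchySeq_of_summable_dist
      simp only [hd_def] at hsum
      simpa [Real.dist_eq, abs_sub_comm] using hsum
    obtain ⟨L, hL⟩ := cauchySeq_tendsto_of_complete hC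
    have h1 : Tendsto (fun j => ENNReal.ofReal (F (k j) x)) atTop (𝓝 (ENNReal.ofReal L)) :=
      (ENNReal.continuous_ofReal.tendsto L).comp hL
    have h2 : Tendsto (fun j => ENNReal.ofReal (-F (k j) x)) atTop
        (𝓝 (ENNReal.ofReal (-L))) :=
      (ENNReal.continuous_ofReal.tendsto (-L)).comp hL.neg
    have hfx : f x = L := by
      simp only [hf_def]
      rw [h1.liminf_eq, h2.liminf_eq]
      rcases le_total 0 L with h | h
      · rw [ENNReal.toReal_ofReal h, ENNReal.ofReal_of_nonpos (by linarith)]; simp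
      · rw [ENNReal.ofReal_of_nonpos h, ENNReal.toReal_ofReal (by linarith)]; simp
    rwa [hfx]
  -- the key Fatou estimate
  have key : ∀ (m : ℕ) (c : ℝ≥0∞),
      (∀ᶠ j in atTop, grandNorm q w a Ω (fun x => F m x - F (k j) x) ≤ c) →
      grandNorm q w a Ω (fun x => F m x - f x) ≤ c := by
    intro m c hc
    rw [grandNorm]
    refine iSup₂_le fun ε hε => ?_
    obtain ⟨hεp, hεq⟩ := hε
    have hppos : (0:ℝ) < q - ε := by linarith
    have hεne : ENNReal.ofReal ε ≠ 0 := (ENNReal.ofReal_pos.mpr hεp).ne'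
    have hG_bound : ∀ᶠ j in atTop,
        (∫⁻ x in Ω, ENNReal.ofReal |F m x - F (k j) x| ^ (q-ε)
          * ENNReal.ofReal (w x * a x ^ ε))
        ≤ c ^ (q-ε) / ENNReal.ofReal ε := by
      filter_upwards [hc] with j hj
      have h1 : (ENNReal.ofReal ε * ∫⁻ x in Ω, ENNReal.ofReal |F m x - F (k j) x| ^ (q-ε)
          * ENNReal.ofReal (w x * a x ^ ε)) ^ (1/(q-ε)) ≤ c :=
        le_trans (grand_le q w a Ω _ ⟨hεp, hεq⟩) hj
      have h2 : ENNReal.ofReal ε * (∫⁻ x in Ω, ENNReal.ofReal |F m x - F (k j) x| ^ (q-ε)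
          * ENNReal.ofReal (w x * a x ^ ε)) ≤ c ^ (q-ε) := by
        have h3 := ENNReal.rpow_le_rpow h1 hppos.le
        rwa [← ENNReal.rpow_mul, one_div_mul_cancel hppos.ne', ENNReal.rpow_one] at h3
      rw [ENNReal.le_div_iff_mul_le (Or.inl hεne) (Or.inl ENNReal.ofReal_ne_top)]
      rwa [mul_comm]
    have hFatou : (∫⁻ x in Ω, ENNReal.ofReal |F m x - f x| ^ (q-ε)
        * ENNReal.ofReal (w x * a x ^ ε)) ≤ c ^ (q-ε) / ENNReal.ofReal ε := by
      have h1 : (∫⁻ x in Ω, ENNReal.ofReal |F m x - f x| ^ (q-ε)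
          * ENNReal.ofReal (w x * a x ^ ε))
          = ∫⁻ x in Ω, liminf (fun j => ENNReal.ofReal |F m x - F (k j) x| ^ (q-ε)
            * ENNReal.ofReal (w x * a x ^ ε)) atTop := by
        refine lintegral_congr_ae ?_
        filter_upwards [hf_lim] with x hx
        have ht : Tendsto (fun j => ENNReal.ofReal |F m x - F (k j) x| ^ (q-ε)
            * ENNReal.ofReal (w x * a x ^ ε)) atTop
            (𝓝 (ENNReal.ofReal |F m x - f x| ^ (q-ε) * ENNReal.ofReal (w x * a x ^ ε))) := by
          refine ENNReal.Tendsto.mul_const ?_ (Or.inr ENNReal.ofReal_ne_top)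
          refine (ENNReal.continuous_rpow_const.tendsto _).comp ?_
          exact (ENNReal.continuous_ofReal.tendsto _).comp
            (((continuous_const.sub continuous_id).abs.tendsto _).comp hx)
        exact ht.liminf_eq.symm
      rw [h1]
      refine le_trans (lintegral_liminf_le fun j =>
        ((((hF_meas m).sub (hF_meas (k j))).abs.ennreal_ofReal.pow measurable_const).mul
          (hv_meas ε))) ?_
      exact liminf_le_of_frequently_le' hG_bound.frequently
    calc (ENNReal.ofReal ε * ∫⁻ x in Ω, ENNReal.ofReal |F m x - f x| ^ (q-ε)
        * ENNReal.ofReal (w x * a x ^ ε)) ^ (1/(q-ε))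
        ≤ (ENNReal.ofReal ε * (c ^ (q-ε) / ENNReal.ofReal ε)) ^ (1/(q-ε)) :=
          ENNReal.rpow_le_rpow (mul_le_mul_right hFatou _) (by positivity)
      _ = c := by
          rw [ENNReal.mul_div_cancel hεne ENNReal.ofReal_ne_top, ← ENNReal.rpow_mul,
            mul_one_div_cancel hppos.ne', ENNReal.rpow_one]
  -- conclusion
  refine ⟨f, hf_meas, ?_, ?_⟩
  · obtain ⟨N1, hN1⟩ := hF_cauchy 1 one_pos
    have h1 : grandNorm q w a Ω (fun x => F N1 x - f x) ≤ ENNReal.ofReal 1 := by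
      apply key
      filter_upwards [eventually_ge_atTop N1] with j hj
      exact (hN1 N1 le_rfl (k j) (le_trans hj hk_mono.le_apply)).le
    have h2 : grandNorm q w a Ω f ≤
        grandNorm q w a Ω (fun x => F N1 x - f x) + grandNorm q w a Ω (F N1) := by
      refine grand_triangle hq w a Ω hw_meas ha_meas ((hF_meas N1).sub hf_meas)
        (hF_meas N1) fun x => ?_
      have e : f x = F N1 x - (F N1 x - f x) := by ring
      calc |f x| = |F N1 x - (F N1 x - f x)| := by rw [← e]
        _ ≤ |F N1 x| + |F N1 x - f x| := abs_sub _ _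
        _ = |F N1 x - f x| + |F N1 x| := add_comm _ _
    exact ne_top_of_le_ne_top
      (ENNReal.add_ne_top.mpr ⟨ENNReal.ofReal_ne_top, hF_mem N1⟩)
      (h2.trans (add_le_add h1 le_rfl))
  · intro δ hδ
    obtain ⟨N, hN⟩ := hF_cauchy (δ/2) (by linarith)
    refine ⟨N, fun m hm => ?_⟩
    have h1 : grandNorm q w a Ω (fun x => F m x - f x) ≤ ENNReal.ofReal (δ/2) := by
      apply key
      filter_upwards [eventually_ge_atTop N] with j hj
      exact (hN m hm (k j) (le_trans hj hk_mono.le_apply)).le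
    exact lt_of_le_of_lt h1 ((ENNReal.ofReal_lt_ofReal_iff hδ).mpr (by linarith))
end
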